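/- Entropy lower-bounds guesswork with side information in the sense of imperfect keys: if a joint distribution p_{KY} on \mathcal{K} \times \mathcal{Y} satisfies \frac{1}{2}\|p_{KY} - u_K \otimes p_Y\|_1 \leq \varepsilon, then G(K|Y) \geq \frac{|\mathcal{K}|+1}{2} - |\mathcal{K}| \varepsilon. -/

import Mathlib

open Fintype in
/-- Guesswork security of an imperfect key: if the joint distribution `p` on `K × Y` is
`ε`-close in normalized ℓ₁ distance to `u_K ⊗ p_Y`, then
`G(K|Y) ≥ (|K|+1)/2 − |K|·ε`. -/
theorem guesswork_imperfect_key {K Y : Type*} [Fintype K] [Nonempty K] [Countable Y]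
    (p : K → Y → ℝ) (hp0 : ∀ k y, 0 ≤ p k y)
    (hp1 : HasSum (fun ky : K × Y => p ky.1 ky.2) 1)
    (ε : ℝ)
    (hε : (1 / 2) *
        ∑' ky : K × Y, |p ky.1 ky.2 - (∑ k' : K, p k' ky.2) / (card K : ℝ)| ≤ ε) :
    ((card K : ℝ) + 1) / 2 - (card K : ℝ) * ε ≤
      ∑' y : Y, ⨅ σ : Fin (card K) ≃ K,
        ∑ k : Fin (card K), (((k : ℕ) : ℝ) + 1) * p (σ k) y := by
  classical
  set n : ℕ := Fintype.card K with hn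
  have hnpos : 0 < n := Fintype.card_pos
  have hnR : (0:ℝ) < (n:ℝ) := by exact_mod_cast hnpos
  set s : Y → ℝ := fun y => ∑ k' : K, p k' y with hs
  set d : K → Y → ℝ := fun k y => p k y - s y / (n:ℝ) with hd
  set t : Y → ℝ := fun y => ∑ k : K, |d k y| with ht
  haveI : Nonempty (Fin n ≃ K) := ⟨(Fintype.equivFin K).symm⟩
  -- s is nonneg, summable with sum 1
  have hs0 : ∀ y, 0 ≤ s y := fun y => Finset.sum_nonneg fun k _ => hp0 k y
  have hSsum : HasSum s 1 := by
    have := ((Equiv.prodComm Y K).hasSum_iff (f := fun ky : K × Y => p ky.1 ky.2)).2 hp1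
    exact this.prod_fiberwise fun y => hasSum_fintype fun k => p k y
  -- summability of |d| on the product
  have habs : Summable fun ky : K × Y => |d ky.1 ky.2| := by
    refine Summable.of_nonneg_of_le (fun ky => abs_nonneg _)
      (f := fun ky : K × Y => p ky.1 ky.2 + s ky.2 / (n:ℝ)) (fun ky => ?_) ?_
    · show |d ky.1 ky.2| ≤ p ky.1 ky.2 + s ky.2 / (n:ℝ)
      calc |d ky.1 ky.2| ≤ |p ky.1 ky.2| + |s ky.2 / (n:ℝ)| := abs_sub _ _
        _ = p ky.1 ky.2 + s ky.2 / (n:ℝ) := by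
            rw [abs_of_nonneg (hp0 _ _), abs_of_nonneg (div_nonneg (hs0 _) hnR.le)]
    · refine hp1.summable.add ?_
      have h2 : ∀ k : K, Summable fun y => s y / (n:ℝ) := fun k => hSsum.summable.div_const _
      exact (summable_prod_of_nonneg (fun ky => div_nonneg (hs0 _) hnR.le)).2
        ⟨h2, Summable.of_finite⟩
  -- t is summable with tsum equal to the product tsum
  have hTsum : HasSum t (∑' ky : K × Y, |d ky.1 ky.2|) := by
    have := ((Equiv.prodComm Y K).hasSum_iff
      (f := fun ky : K × Y => |d ky.1 ky.2|)).2 habs.hasSum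
    exact this.prod_fiberwise fun y => hasSum_fintype fun k => |d k y|
  -- the hypothesis in terms of t
  have hT : (n:ℝ) / 2 * (∑' y, t y) ≤ (n:ℝ) * ε := by
    rw [hTsum.tsum_eq]
    have h := mul_le_mul_of_nonneg_left hε hnR.le
    calc (n:ℝ) / 2 * (∑' ky : K × Y, |d ky.1 ky.2|)
        = (n:ℝ) * ((1/2) * ∑' ky : K × Y, |p ky.1 ky.2 - (∑ k' : K, p k' ky.2) / (n:ℝ)|) := by
          simp only [hd, hs]; ring
      _ ≤ (n:ℝ) * ε := h
  -- per-y sum of d over all of K is zero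
  have hdsum : ∀ y, ∑ k : K, d k y = 0 := by
    intro y
    have hne : (n:ℝ) ≠ 0 := hnR.ne'
    simp only [hd, Finset.sum_sub_distrib, Finset.sum_const, Finset.card_univ, ← hs, ← hn,
      nsmul_eq_mul]
    field_simp
    simp [hs]
  -- key pointwise bound
  have key : ∀ (y : Y) (σ : Fin n ≃ K),
      ((n:ℝ) + 1) / 2 * s y - (n:ℝ) / 2 * t y ≤
        ∑ k : Fin n, (((k:ℕ):ℝ) + 1) * p (σ k) y := by
    intro y σ
    have hperm0 : ∑ k : Fin n, d (σ k) y = 0 := by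
      rw [Equiv.sum_comp σ (fun k => d k y)]; exact hdsum y
    have hpermt : ∑ k : Fin n, |d (σ k) y| = t y := by
      rw [Equiv.sum_comp σ (fun k => |d k y|)]
    have hgauss : ∑ k : Fin n, (((k:ℕ):ℝ) + 1) = (n:ℝ) * ((n:ℝ) + 1) / 2 := by
      have h1 : (∑ k : Fin n, ((k:ℕ) + 1)) * 2 = n * (n + 1) := by
        rw [Fin.sum_univ_eq_sum_range (fun i => i + 1)]
        have := Finset.sum_range_id_mul_two (n + 1)
        rw [Finset.sum_range_succ'] at this
        simpa [Nat.add_mul, Nat.mul_comm] using this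
      have h2 : ((∑ k : Fin n, ((k:ℕ) + 1) : ℕ) : ℝ) * 2 = (n:ℝ) * ((n:ℝ) + 1) := by
        exact_mod_cast congrArg (Nat.cast : ℕ → ℝ) h1
      push_cast at h2
      linarith
    -- expand p = d + s/n
    have expand : ∑ k : Fin n, (((k:ℕ):ℝ) + 1) * p (σ k) y
        = (∑ k : Fin n, ((((k:ℕ):ℝ) + 1) - ((n:ℝ) + 1) / 2) * d (σ k) y)
          + ((n:ℝ) + 1) / 2 * s y := by
      have hp_eq : ∀ k : Fin n, p (σ k) y = d (σ k) y + s y / (n:ℝ) := by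
        intro k; simp [hd]
      calc ∑ k : Fin n, (((k:ℕ):ℝ) + 1) * p (σ k) y
          = ∑ k : Fin n, ((((k:ℕ):ℝ) + 1) * d (σ k) y + (((k:ℕ):ℝ) + 1) * (s y / (n:ℝ))) := by
            refine Finset.sum_congr rfl fun k _ => ?_
            rw [hp_eq k]; ring
        _ = (∑ k : Fin n, (((k:ℕ):ℝ) + 1) * d (σ k) y)
            + (∑ k : Fin n, (((k:ℕ):ℝ) + 1)) * (s y / (n:ℝ)) := by
            rw [Finset.sum_add_distrib, Finset.sum_mul]
        _ = (∑ k : Fin n, ((((k:ℕ):ℝ) + 1) - ((n:ℝ) + 1) / 2) * d (σ k) y)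
            + ((n:ℝ) + 1) / 2 * (∑ k : Fin n, d (σ k) y)
            + (∑ k : Fin n, (((k:ℕ):ℝ) + 1)) * (s y / (n:ℝ)) := by
            rw [← Finset.sum_add_distrib.symm]
            congr 1
            rw [Finset.mul_sum, ← Finset.sum_add_distrib]
            refine Finset.sum_congr rfl fun k _ => ?_
            ring
        _ = (∑ k : Fin n, ((((k:ℕ):ℝ) + 1) - ((n:ℝ) + 1) / 2) * d (σ k) y)
            + ((n:ℝ) + 1) / 2 * s y := by
            rw [hperm0, hgauss]
            field_simp
            simp only [add_comm, add_left_comm, add_assoc, mul_comm, mul_zero, zero_mul, zero_add]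
    rw [expand]
    have bound : -((n:ℝ) / 2 * t y)
        ≤ ∑ k : Fin n, ((((k:ℕ):ℝ) + 1) - ((n:ℝ) + 1) / 2) * d (σ k) y := by
      rw [← hpermt, Finset.mul_sum, ← Finset.sum_neg_distrib]
      refine Finset.sum_le_sum fun k _ => ?_
      have hc : |(((k:ℕ):ℝ) + 1) - ((n:ℝ) + 1) / 2| ≤ (n:ℝ) / 2 := by
        have hk1 : ((k:ℕ):ℝ) + 1 ≤ (n:ℝ) := by
          have := k.isLt
          exact_mod_cast Nat.succ_le_of_lt this
        have hk0 : (0:ℝ) ≤ ((k:ℕ):ℝ) := Nat.cast_nonneg _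
        rw [abs_le]; constructor <;> nlinarith
      calc -((n:ℝ) / 2 * |d (σ k) y|)
          ≤ -(|(((k:ℕ):ℝ) + 1) - ((n:ℝ) + 1) / 2| * |d (σ k) y|) := by
            exact neg_le_neg (mul_le_mul_of_nonneg_right hc (abs_nonneg _))
        _ = -|((((k:ℕ):ℝ) + 1) - ((n:ℝ) + 1) / 2) * d (σ k) y| := by rw [abs_mul]
        _ ≤ ((((k:ℕ):ℝ) + 1) - ((n:ℝ) + 1) / 2) * d (σ k) y := neg_abs_le _
    linarith
  -- define the per-y guesswork and establish bounds
  set G : Y → ℝ := fun y => ⨅ σ : Fin n ≃ K,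
    ∑ k : Fin n, (((k:ℕ):ℝ) + 1) * p (σ k) y with hG
  have hG_nonneg : ∀ y, 0 ≤ G y := by
    intro y
    refine le_ciInf fun σ => Finset.sum_nonneg fun k _ => ?_
    have : (0:ℝ) ≤ ((k:ℕ):ℝ) + 1 := by positivity
    exact mul_nonneg this (hp0 _ _)
  have hG_lb : ∀ y, ((n:ℝ) + 1) / 2 * s y - (n:ℝ) / 2 * t y ≤ G y :=
    fun y => le_ciInf fun σ => key y σ
  have hG_ub : ∀ y, G y ≤ (n:ℝ) * s y := by
    intro y
    have hbdd : BddBelow (Set.range fun σ : Fin n ≃ K =>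
        ∑ k : Fin n, (((k:ℕ):ℝ) + 1) * p (σ k) y) := by
      refine ⟨0, fun x hx => ?_⟩
      obtain ⟨σ, rfl⟩ := hx
      exact Finset.sum_nonneg fun k _ => mul_nonneg (by positivity) (hp0 _ _)
    obtain ⟨σ₀⟩ := (inferInstance : Nonempty (Fin n ≃ K))
    calc G y ≤ ∑ k : Fin n, (((k:ℕ):ℝ) + 1) * p (σ₀ k) y := ciInf_le hbdd σ₀
      _ ≤ ∑ k : Fin n, (n:ℝ) * p (σ₀ k) y := by
          refine Finset.sum_le_sum fun k _ => ?_
          have hk1 : ((k:ℕ):ℝ) + 1 ≤ (n:ℝ) := by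
            exact_mod_cast Nat.succ_le_of_lt k.isLt
          exact mul_le_mul_of_nonneg_right hk1 (hp0 _ _)
      _ = (n:ℝ) * ∑ k : Fin n, p (σ₀ k) y := (Finset.mul_sum _ _ _).symm
      _ = (n:ℝ) * s y := by rw [Equiv.sum_comp σ₀ (fun k => p k y)]
  -- summability
  have hGsum : Summable G :=
    Summable.of_nonneg_of_le hG_nonneg hG_ub (hSsum.summable.mul_left _)
  have hLHSsum : Summable fun y => ((n:ℝ) + 1) / 2 * s y - (n:ℝ) / 2 * t y :=
    (hSsum.summable.mul_left _).sub (hTsum.summable.mul_left _)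
  -- conclude
  have hfinal : ∑' y, (((n:ℝ) + 1) / 2 * s y - (n:ℝ) / 2 * t y) ≤ ∑' y, G y :=
    Summable.tsum_le_tsum (fun y => hG_lb y) hLHSsum hGsum
  have heq : ∑' y, (((n:ℝ) + 1) / 2 * s y - (n:ℝ) / 2 * t y)
      = ((n:ℝ) + 1) / 2 - (n:ℝ) / 2 * (∑' y, t y) := by
    rw [Summable.tsum_sub (hSsum.summable.mul_left _) (hTsum.summable.mul_left _),
      tsum_mul_left, tsum_mul_left, hSsum.tsum_eq, mul_one]
  rw [heq] at hfinal
  calc ((n:ℝ) + 1) / 2 - (n:ℝ) * ε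
      ≤ ((n:ℝ) + 1) / 2 - (n:ℝ) / 2 * (∑' y, t y) := by linarith
    _ ≤ ∑' y, G y := hfinal
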